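/- Let f be an entire function and Δ a bounded forward invariant Siegel disk of f. Then every bounded connected component H of ℂ \ closure(Δ) (a 'hidden component') is contained in the Fatou set of f, and f(H) is contained in Δ̂. In particular Δ̂ is forward invariant under f. -/

import Mathlib

open Set Topology Bornology Filter Metric

noncomputable section

/-- The "hat" of a bounded set: its closure together with all bounded connected
components of the complement of its closure. -/
def hat (X : Set ℂ) : Set ℂ :=
  closure X ∪ {z | z ∉ closure X ∧ IsBounded (connectedComponentIn (closure X)ᶜ z)}

/-- The ω-limit set of the orbit of `x` under `f`. -/
def omegaSet (f : ℂ → ℂ) (x : ℂ) : Set ℂ :=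
  {y | MapClusterPt y atTop fun n => f^[n] x}

/-- `v` is a singular value of `f`: on no open neighborhood of `v` are all branches of
the inverse well defined and univalent. -/
def IsSingularValue (f : ℂ → ℂ) (v : ℂ) : Prop :=
  ∀ V : Set ℂ, IsOpen V → v ∈ V →
    ∃ x ∈ f ⁻¹' V, ¬ (Set.InjOn f (connectedComponentIn (f ⁻¹' V) x) ∧
      f '' connectedComponentIn (f ⁻¹' V) x = V)

/-- The Fatou set: points near which the family of iterates is normal (equicontinuous). -/
def fatouSet (f : ℂ → ℂ) : Set ℂ :=
  {z | ∃ U ∈ 𝓝 z, IsOpen U ∧ EquicontinuousOn (fun n : ℕ => f^[n]) U}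

/-- `φ` is a biholomorphism from `A` onto `B`. -/
def Biholo (φ : ℂ → ℂ) (A B : Set ℂ) : Prop :=
  DifferentiableOn ℂ φ A ∧ Set.InjOn φ A ∧ φ '' A = B

/-- `Δ` is a forward invariant Siegel disk of `f` with rotation number `θ`. -/
def IsSiegelDisk (f : ℂ → ℂ) (Δ : Set ℂ) (θ : ℝ) : Prop :=
  IsOpen Δ ∧ IsConnected Δ ∧ f '' Δ = Δ ∧ Δ ⊆ fatouSet f ∧ Irrational θ ∧
  ∃ φ : ℂ → ℂ, Biholo φ (Metric.ball 0 1) Δ ∧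
    ∀ z ∈ Metric.ball (0:ℂ) 1,
      f (φ z) = φ (Complex.exp (2 * Real.pi * θ * Complex.I) * z)

/-- `U` is a connected component of the Fatou set of `f`. -/
def IsFatouComponent (f : ℂ → ℂ) (U : Set ℂ) : Prop :=
  ∃ z ∈ fatouSet f, U = connectedComponentIn (fatouSet f) z

/-- A periodic Fatou component. -/
def IsPeriodicFatouComponent (f : ℂ → ℂ) (U : Set ℂ) : Prop :=
  IsFatouComponent f U ∧ ∃ n : ℕ, 0 < n ∧ f^[n] '' U ⊆ U

/-- The Separation Property: closures of any two distinct periodic Fatou components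
intersect in at most one point. -/
def SeparationProperty (f : ℂ → ℂ) : Prop :=
  ∀ U V : Set ℂ, IsPeriodicFatouComponent f U → IsPeriodicFatouComponent f V →
    U ≠ V → (closure U ∩ closure V).Subsingleton

/-- A wandering domain: a Fatou component whose forward images lie in pairwise
distinct Fatou components. -/
def IsWanderingDomain (f : ℂ → ℂ) (U : Set ℂ) : Prop :=
  IsFatouComponent f U ∧
  ∀ m n : ℕ, m < n → ∀ z ∈ U,
    connectedComponentIn (fatouSet f) (f^[m] z) ≠ connectedComponentIn (fatouSet f) (f^[n] z)

/-- Only the finite set `S` of singular values interacts with the Siegel disk `Δ`. -/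
def InteractingSingularSet (f : ℂ → ℂ) (Δ : Set ℂ) (S : Set ℂ) : Prop :=
  S.Finite ∧ S ⊆ {v | IsSingularValue f v} ∧
  (∀ s ∈ S, (omegaSet f s ∩ hat Δ).Nonempty) ∧
  closure (⋃ s ∈ {v | IsSingularValue f v} \ S, omegaSet f s) ∩ hat Δ = ∅ ∧
  closure ({v | IsSingularValue f v} \ S) ∩ frontier Δ = ∅

/-- `θ` is a Herman number: every analytic orientation preserving circle diffeomorphism
(given by its lift) with rotation number `θ` is analytically linearizable. -/
def IsHermanNumber (θ : ℝ) : Prop :=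
  ∀ F : ℝ → ℝ, AnalyticOnNhd ℝ F Set.univ → StrictMono F →
    (∀ x, F (x + 1) = F x + 1) → (∀ x, 0 < deriv F x) →
    (∀ x : ℝ, Filter.Tendsto (fun n : ℕ => (F^[n] x - x) / n) Filter.atTop (nhds θ)) →
    ∃ H : ℝ → ℝ, AnalyticOnNhd ℝ H Set.univ ∧ StrictMono H ∧
      (∀ x, H (x + 1) = H x + 1) ∧ ∀ x, H (F x) = H x + θ

/-- `f` restricted to `U` is a holomorphic covering of `V`. -/
def IsHolCoveringOn (f : ℂ → ℂ) (U V : Set ℂ) : Prop :=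
  DifferentiableOn ℂ f U ∧ f '' U = V ∧
  ∀ v ∈ V, ∃ W, IsOpen W ∧ v ∈ W ∧ W ⊆ V ∧
    ∀ x ∈ U ∩ f ⁻¹' W, Set.BijOn f (connectedComponentIn (U ∩ f ⁻¹' W) x) W

/-- Auxiliary: the frontier of a connected component of the complement of a closed set
is contained in the closed set. -/
lemma frontier_connectedComponentIn_compl_subset {S : Set ℂ} (hS : IsClosed S) {z : ℂ} :
    frontier (connectedComponentIn Sᶜ z) ⊆ S := by
  intro x hx
  by_contra hxS
  have hxc : x ∈ Sᶜ := hxS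
  have hopen : IsOpen (connectedComponentIn Sᶜ x) :=
    hS.isOpen_compl.connectedComponentIn
  have hxmem : x ∈ connectedComponentIn Sᶜ x := mem_connectedComponentIn hxc
  have hxcl : x ∈ closure (connectedComponentIn Sᶜ z) := hx.1
  obtain ⟨y, hyC, hyH⟩ :=
    mem_closure_iff.mp hxcl _ hopen hxmem
  have h1 : connectedComponentIn Sᶜ x = connectedComponentIn Sᶜ y :=
    connectedComponentIn_eq hyC
  have h2 : connectedComponentIn Sᶜ z = connectedComponentIn Sᶜ y :=
    connectedComponentIn_eq hyH
  have hxH : x ∈ connectedComponentIn Sᶜ z := by rw [h2, ← h1]; exact hxmem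
  have hHo : IsOpen (connectedComponentIn Sᶜ z) := hS.isOpen_compl.connectedComponentIn
  exact hx.2 (by rwa [hHo.interior_eq])

/-- Auxiliary: a family which is uniformly Lipschitz on `s` is equicontinuous on `s`. -/
lemma equicontinuousOn_of_lipschitzOnWith {ι : Type*} {F : ι → ℂ → ℂ} {s : Set ℂ} {K : NNReal}
    (h : ∀ i, LipschitzOnWith K (F i) s) : EquicontinuousOn F s := by
  apply UniformEquicontinuousOn.equicontinuousOn
  intro U hU
  obtain ⟨ε, hε, hUε⟩ := Metric.mem_uniformity_dist.mp hU
  have hδ : (0:ℝ) < ε / (K + 1) := by positivity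
  have hmem : {p : ℂ × ℂ | dist p.1 p.2 < ε / (K + 1)} ∩ s ×ˢ s ∈
      uniformity ℂ ⊓ Filter.principal (s ×ˢ s) :=
    Filter.inter_mem_inf (Metric.dist_mem_uniformity hδ) (Filter.mem_principal_self _)
  filter_upwards [hmem] with p hp i
  obtain ⟨hpd, hp1, hp2⟩ := hp
  apply hUε
  calc dist (F i p.1) (F i p.2) ≤ K * dist p.1 p.2 := (h i).dist_le_mul _ hp1 _ hp2
    _ ≤ K * (ε / (K + 1)) := by
        exact mul_le_mul_of_nonneg_left hpd.le K.coe_nonneg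
    _ < ε := by
        rw [mul_comm, div_mul_eq_mul_div, div_lt_iff₀ (by positivity)]
        nlinarith [K.coe_nonneg]

/-- hidden components are in the Fatou set and `Δ̂` is forward invariant. -/
theorem stmt6 (f : ℂ → ℂ) (hf : Differentiable ℂ f) (Δ : Set ℂ) (θ : ℝ)
    (hΔ : IsSiegelDisk f Δ θ) (hb : IsBounded Δ) :
    (∀ z, z ∉ closure Δ → IsBounded (connectedComponentIn (closure Δ)ᶜ z) →
      connectedComponentIn (closure Δ)ᶜ z ⊆ fatouSet f ∧
      f '' connectedComponentIn (closure Δ)ᶜ z ⊆ hat Δ) ∧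
    f '' hat Δ ⊆ hat Δ := by
  obtain ⟨hΔo, hΔc, hΔf, -, -, φ, ⟨hφd, hφi, hφim⟩, -⟩ := hΔ
  -- basic facts
  have hcl : IsClosed (closure Δ) := isClosed_closure
  -- a bound for the closure of Δ
  obtain ⟨M0, hM0⟩ := hb.closure.subset_closedBall 0
  set M : ℝ := max M0 0 with hMdef
  have hM : ∀ w ∈ closure Δ, ‖w‖ ≤ M := fun w hw => by
    have := hM0 hw
    rw [Metric.mem_closedBall, dist_zero_right] at this
    exact this.trans (le_max_left _ _)
  -- iterates preserve Δ
  have hiter : ∀ n : ℕ, f^[n] '' Δ = Δ := by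
    intro n
    induction n with
    | zero => simp
    | succ n ih => rw [Function.iterate_succ', Set.image_comp, ih, hΔf]
  -- iterates map the closure of Δ into itself
  have hclosΔ : ∀ n : ℕ, f^[n] '' closure Δ ⊆ closure Δ := fun n => by
    calc f^[n] '' closure Δ ⊆ closure (f^[n] '' Δ) :=
          image_closure_subset_closure_image (hf.continuous.iterate n)
      _ = closure Δ := by rw [hiter n]
  have hfclos : f '' closure Δ ⊆ closure Δ := by
    have := hclosΔ 1
    simpa using this
  -- f is a nonconstant entire function, hence an open map on open sets
  have hopenmap : ∀ s : Set ℂ, IsOpen s → IsOpen (f '' s) := by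
    have hfa : AnalyticOnNhd ℂ f Set.univ :=
      hf.differentiableOn.analyticOnNhd isOpen_univ
    rcases hfa.is_constant_or_isOpen isPreconnected_univ with ⟨w, hw⟩ | h
    · exfalso
      have h0 : (0:ℂ) ∈ Metric.ball (0:ℂ) 1 := by simp
      have h12 : (1/2 : ℂ) ∈ Metric.ball (0:ℂ) 1 := by
        simp [Metric.mem_ball]
        norm_num
      have hne : φ 0 ≠ φ (1/2) := fun hc => by
        have := hφi h0 h12 hc
        norm_num at this
      have hmem0 : φ 0 ∈ Δ := hφim ▸ ⟨0, h0, rfl⟩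
      have hmem12 : φ (1/2) ∈ Δ := hφim ▸ ⟨1/2, h12, rfl⟩
      have e0 : f (φ 0) = w := hw _ trivial
      have e12 : f (φ (1/2)) = w := hw _ trivial
      have i0 : f (φ 0) ∈ Δ := hΔf ▸ ⟨_, hmem0, rfl⟩
      have i12 : f (φ (1/2)) ∈ Δ := hΔf ▸ ⟨_, hmem12, rfl⟩
      -- Δ = f '' Δ ⊆ {w}, but Δ has at least two points... instead:
      -- f '' Δ = {w}... but f '' Δ = Δ is open; {w} is not open.
      have hsub : Δ ⊆ {w} := by
        intro t ht
        rw [← hΔf] at ht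
        obtain ⟨t', ht', rfl⟩ := ht
        exact hw _ trivial
      have hΔw : Δ = {w} :=
        hsub.antisymm (by rintro t rfl; exact e0 ▸ i0)
      have : φ 0 = w := by
        have := hsub hmem0
        simpa using this
      have : φ (1/2) = w := by
        have := hsub hmem12
        simpa using this
      exact hne (by simp_all)
    · exact fun s hs => h s (Set.subset_univ s) hs
  -- the main claim about hidden components
  have main : ∀ z, z ∉ closure Δ → IsBounded (connectedComponentIn (closure Δ)ᶜ z) →
      connectedComponentIn (closure Δ)ᶜ z ⊆ fatouSet f ∧
      f '' connectedComponentIn (closure Δ)ᶜ z ⊆ hat Δ := by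
    intro z hz hzb
    set H : Set ℂ := connectedComponentIn (closure Δ)ᶜ z with hHdef
    have hHopen : IsOpen H := hcl.isOpen_compl.connectedComponentIn
    have hHfr : frontier H ⊆ closure Δ := frontier_connectedComponentIn_compl_subset hcl
    -- iterates are uniformly bounded on the closure of H (maximum principle)
    have hbound : ∀ n : ℕ, ∀ w ∈ closure H, ‖f^[n] w‖ ≤ M := by
      intro n w hw
      refine Complex.norm_le_of_forall_mem_frontier_norm_le hzb
        (hf.iterate n).diffContOnCl (fun y hy => ?_) hw
      exact hM _ (hclosΔ n ⟨y, hHfr hy, rfl⟩)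
    constructor
    · -- H is contained in the Fatou set
      intro x hx
      obtain ⟨r, hr, hrH⟩ := (Metric.nhds_basis_closedBall.mem_iff).mp (hHopen.mem_nhds hx)
      refine ⟨Metric.ball x (r/2), Metric.ball_mem_nhds x (by positivity),
        Metric.isOpen_ball, ?_⟩
      -- uniform Lipschitz bound on the small ball, via the Cauchy estimate
      have hK : ∀ n : ℕ, ∀ w ∈ Metric.ball x (r/2), ‖deriv f^[n] w‖ ≤ M / (r/2) := by
        intro n w hw
        refine Complex.norm_deriv_le_of_forall_mem_sphere_norm_le (by positivity)
          (hf.iterate n).diffContOnCl (fun y hy => ?_)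
        refine hbound n y (subset_closure (hrH ?_))
        rw [Metric.mem_closedBall]
        calc dist y x ≤ dist y w + dist w x := dist_triangle _ _ _
          _ ≤ r/2 + r/2 := by
              rw [Metric.mem_sphere] at hy
              rw [Metric.mem_ball] at hw
              exact add_le_add hy.le hw.le
          _ = r := by ring
      apply equicontinuousOn_of_lipschitzOnWith (K := Real.toNNReal (M / (r/2)))
      intro n
      apply (convex_ball x (r/2)).lipschitzOnWith_of_nnnorm_deriv_le
        (fun w _ => (hf.iterate n).differentiableAt)
      intro w hw
      rw [← NNReal.coe_le_coe, coe_nnnorm,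
        Real.coe_toNNReal _ (by positivity : (0:ℝ) ≤ M / (r/2))]
      exact hK n w hw
    · -- f '' H ⊆ hat Δ
      rintro w ⟨x, hxH, rfl⟩
      by_cases hfx : f x ∈ closure Δ
      · exact Or.inl hfx
      · refine Or.inr ⟨hfx, ?_⟩
        set C : Set ℂ := connectedComponentIn (closure Δ)ᶜ (f x) with hCdef
        have hCp : IsPreconnected C := isPreconnected_connectedComponentIn
        have hKc : IsCompact (f '' closure H) :=
          (Metric.isCompact_of_isClosed_isBounded isClosed_closure hzb.closure).image
            hf.continuous
        have hu : IsOpen (f '' H) := hopenmap H hHopen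
        have hv : IsOpen (f '' closure H)ᶜ := hKc.isClosed.isOpen_compl
        have hsub : C ⊆ f '' H ∪ (f '' closure H)ᶜ := by
          intro c hc
          by_cases hcK : c ∈ f '' closure H
          · obtain ⟨y, hy, rfl⟩ := hcK
            left
            by_cases hyH : y ∈ H
            · exact ⟨y, hyH, rfl⟩
            · exfalso
              have hyfr : y ∈ frontier H := by
                rw [frontier, hHopen.interior_eq]
                exact ⟨hy, hyH⟩
              have : f y ∈ closure Δ := hfclos ⟨y, hHfr hyfr, rfl⟩
              exact (connectedComponentIn_subset _ _ hc) this
          · exact Or.inr hcK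
        have hCu : (C ∩ f '' H).Nonempty :=
          ⟨f x, mem_connectedComponentIn hfx, ⟨x, hxH, rfl⟩⟩
        have hCv : ¬ (C ∩ (f '' closure H)ᶜ).Nonempty := by
          intro hCv
          obtain ⟨p, hpC, hpu, hpv⟩ := hCp _ _ hu hv hsub hCu hCv
          exact hpv (Set.image_mono (f := f) subset_closure hpu)
        have hCsub : C ⊆ f '' closure H := by
          intro c hc
          by_contra hcn
          exact hCv ⟨c, hc, hcn⟩
        exact hKc.isBounded.subset hCsub
  refine ⟨main, ?_⟩
  rintro w ⟨x, hx, rfl⟩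
  rcases hx with hx | ⟨hx1, hx2⟩
  · exact Or.inl (hfclos ⟨x, hx, rfl⟩)
  · exact (main x hx1 hx2).2 ⟨x, mem_connectedComponentIn hx1, rfl⟩
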